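/- Let E be a finite-dimensional real normed vector space, let f : E → ℝ be locally Lipschitz (every point has a neighbourhood on which f is Lipschitz), and let x0 ∈ E. Then there exists an open convex neighbourhood U of x0 with compact closure such that the least Lipschitz constant of f on cl U equals the supremum of the local dilatations of f over cl U; that is, L(cl U, f) = sSup { dil f x : x ∈ cl U }. -/

import Mathlib

open Metric Set

/-- The least Lipschitz constant of `f` on `A`:
`sSup { |f x1 − f x2| / ‖x1 − x2‖ : x1, x2 ∈ A, x1 ≠ x2 }`. -/
noncomputable def leastLipConst {E : Type*} [NormedAddCommGroup E]
    (f : E → ℝ) (A : Set E) : ℝ :=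
  sSup { c : ℝ | ∃ x1 ∈ A, ∃ x2 ∈ A, x1 ≠ x2 ∧ c = |f x1 - f x2| / ‖x1 - x2‖ }

/-- The local dilatation of `f` at `x`:
`sInf { L(cl V, f) : V an open neighbourhood of x with compact closure }`. -/
noncomputable def dil {E : Type*} [NormedAddCommGroup E] (f : E → ℝ) (x : E) : ℝ :=
  sInf { c : ℝ | ∃ V : Set E, IsOpen V ∧ x ∈ V ∧ IsCompact (closure V) ∧
    c = leastLipConst f (closure V) }

section Aux

variable {E : Type*} [NormedAddCommGroup E] {f : E → ℝ}

lemma leastLipConst_nonneg (f : E → ℝ) (A : Set E) : 0 ≤ leastLipConst f A := by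
  apply Real.sSup_nonneg
  rintro c ⟨a, -, b, -, -, rfl⟩
  positivity

lemma bddAbove_ratioSet {A : Set E} {C : ℝ}
    (h : ∀ a ∈ A, ∀ b ∈ A, |f a - f b| ≤ C * ‖a - b‖) :
    BddAbove { c : ℝ | ∃ x1 ∈ A, ∃ x2 ∈ A, x1 ≠ x2 ∧ c = |f x1 - f x2| / ‖x1 - x2‖ } := by
  refine ⟨C, ?_⟩
  rintro c ⟨a, ha, b, hb, hab, rfl⟩
  have hn : 0 < ‖a - b‖ := by
    rw [norm_pos_iff, sub_ne_zero]; exact hab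
  rw [div_le_iff₀ hn]
  exact h a ha b hb

lemma ratio_le_leastLipConst {A : Set E} {C : ℝ}
    (h : ∀ a ∈ A, ∀ b ∈ A, |f a - f b| ≤ C * ‖a - b‖)
    {a b : E} (ha : a ∈ A) (hb : b ∈ A) (hab : a ≠ b) :
    |f a - f b| / ‖a - b‖ ≤ leastLipConst f A :=
  le_csSup (bddAbove_ratioSet h) ⟨a, ha, b, hb, hab, rfl⟩

lemma abs_sub_le_leastLipConst {A : Set E} {C : ℝ}
    (h : ∀ a ∈ A, ∀ b ∈ A, |f a - f b| ≤ C * ‖a - b‖)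
    {a b : E} (ha : a ∈ A) (hb : b ∈ A) :
    |f a - f b| ≤ leastLipConst f A * ‖a - b‖ := by
  rcases eq_or_ne a b with rfl | hab
  · simp
  · have hn : 0 < ‖a - b‖ := by rw [norm_pos_iff, sub_ne_zero]; exact hab
    have := ratio_le_leastLipConst h ha hb hab
    rw [div_le_iff₀ hn] at this
    linarith

lemma leastLipConst_le {A : Set E} {M : ℝ} (hM : 0 ≤ M)
    (h : ∀ a ∈ A, ∀ b ∈ A, |f a - f b| ≤ M * ‖a - b‖) :
    leastLipConst f A ≤ M := by
  apply Real.sSup_le _ hM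
  rintro c ⟨a, ha, b, hb, hab, rfl⟩
  have hn : 0 < ‖a - b‖ := by rw [norm_pos_iff, sub_ne_zero]; exact hab
  rw [div_le_iff₀ hn]
  exact h a ha b hb

/-- A locally Lipschitz function satisfies a global Lipschitz-type bound on any compact set. -/
lemma exists_lip_bound_of_compact (hf : LocallyLipschitz f) {K : Set E} (hK : IsCompact K) :
    ∃ C : ℝ, ∀ a ∈ K, ∀ b ∈ K, |f a - f b| ≤ C * ‖a - b‖ := by
  rcases K.eq_empty_or_nonempty with rfl | hne
  · exact ⟨0, by simp⟩
  have hfc : Continuous f := hf.continuous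
  choose κ t ht hl using hf
  choose ρ hρpos hρ using fun x => Metric.mem_nhds_iff.1 (ht x)
  obtain ⟨s, hsK, hcov⟩ := hK.elim_nhds_subcover (fun x => ball x (ρ x / 2))
    (fun x _ => ball_mem_nhds x (by linarith [hρpos x]))
  obtain ⟨z, hzK, hz'⟩ := hK.exists_isMaxOn (f := fun y => |f y|) hne
    ((continuous_abs.comp hfc).continuousOn)
  have hz : ∀ y ∈ K, |f y| ≤ |f z| := fun y hy => hz' hy
  obtain ⟨x₀, hx₀s, -⟩ := mem_iUnion₂.1 (hcov hne.choose_spec)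
  have hsne : s.Nonempty := ⟨x₀, hx₀s⟩
  set B : ℝ := |f z| with hB
  have hB0 : 0 ≤ B := abs_nonneg _
  set Km : ℝ := ((s.sup κ : NNReal) : ℝ) with hKm
  have hKm0 : 0 ≤ Km := NNReal.coe_nonneg _
  set ρm : ℝ := s.inf' hsne (fun x => ρ x / 2) with hρm
  have hρm0 : 0 < ρm := by
    rw [hρm, Finset.lt_inf'_iff]
    intro x _
    linarith [hρpos x]
  refine ⟨Km + 2 * B / ρm, fun a ha b hb => ?_⟩
  obtain ⟨x, hxs, hax⟩ := mem_iUnion₂.1 (hcov ha)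
  have hax' : dist a x < ρ x / 2 := mem_ball.1 hax
  have hC2 : 0 ≤ 2 * B / ρm := by positivity
  by_cases hd : dist a b < ρ x / 2
  · have hbx : b ∈ ball x (ρ x) := by
      rw [mem_ball]
      calc dist b x ≤ dist b a + dist a x := dist_triangle _ _ _
        _ < ρ x / 2 + ρ x / 2 := by rw [dist_comm b a]; linarith
        _ = ρ x := by ring
    have hρx0 := hρpos x
    have haxx : a ∈ ball x (ρ x) := mem_ball.2 (by linarith)
    have := (hl x).dist_le_mul a (hρ x haxx) b (hρ x hbx)
    rw [Real.dist_eq, dist_eq_norm] at this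
    have hκ : (κ x : ℝ) ≤ Km := by
      exact_mod_cast Finset.le_sup (f := κ) hxs
    calc |f a - f b| ≤ (κ x : ℝ) * ‖a - b‖ := this
      _ ≤ Km * ‖a - b‖ := by
          exact mul_le_mul_of_nonneg_right hκ (norm_nonneg _)
      _ ≤ (Km + 2 * B / ρm) * ‖a - b‖ := by
          apply mul_le_mul_of_nonneg_right _ (norm_nonneg _); linarith
  · push_neg at hd
    have hρx : ρm ≤ ρ x / 2 := Finset.inf'_le _ hxs
    have hdn : ρm ≤ ‖a - b‖ := by
      rw [← dist_eq_norm]; linarith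
    have h2B : |f a - f b| ≤ 2 * B := by
      calc |f a - f b| ≤ |f a| + |f b| := abs_sub _ _
        _ ≤ B + B := add_le_add (hz a ha) (hz b hb)
        _ = 2 * B := by ring
    have : 2 * B ≤ 2 * B / ρm * ‖a - b‖ := by
      rw [div_mul_eq_mul_div, le_div_iff₀ hρm0]
      have : 2 * B * ρm ≤ 2 * B * ‖a - b‖ :=
        mul_le_mul_of_nonneg_left hdn (by linarith)
      linarith
    calc |f a - f b| ≤ 2 * B := h2B
      _ ≤ 2 * B / ρm * ‖a - b‖ := this
      _ ≤ (Km + 2 * B / ρm) * ‖a - b‖ := by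
          apply mul_le_mul_of_nonneg_right _ (norm_nonneg _); linarith

variable [NormedSpace ℝ E]

/-- Chain/telescoping lemma: if every point of a convex set `K` has an open neighbourhood
on which the slopes of `f` are bounded by `M`, then slopes of `f` on `K` are bounded by `M`. -/
lemma convex_slope_bound {M : ℝ} {K : Set E} (hK : Convex ℝ K)
    (h : ∀ x ∈ K, ∃ V : Set E, IsOpen V ∧ x ∈ V ∧
      ∀ a ∈ V, ∀ b ∈ V, |f a - f b| ≤ M * ‖a - b‖)
    {a b : E} (ha : a ∈ K) (hb : b ∈ K) : |f a - f b| ≤ M * ‖a - b‖ := by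
  set γ : ℝ → E := fun t => a + t • (b - a) with hγdef
  have hγc : Continuous γ := by
    apply continuous_const.add (continuous_id.smul continuous_const)
  have hγK : ∀ t : Icc (0:ℝ) 1, γ t ∈ K := fun t => hK.add_smul_sub_mem ha hb t.2
  choose V hVopen hVmem hVbound using h
  have hcov : Icc (0:ℝ) 1 ⊆ ⋃ i : Icc (0:ℝ) 1, γ ⁻¹' (V (γ i) (hγK i)) := by
    intro u hu
    exact mem_iUnion.2 ⟨⟨u, hu⟩, hVmem _ _⟩
  obtain ⟨δ, hδ, hball⟩ := lebesgue_number_lemma_of_metric isCompact_Icc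
    (fun i => (hVopen _ _).preimage hγc) hcov
  obtain ⟨n, hn⟩ := exists_nat_one_div_lt hδ
  set N : ℕ := n + 1 with hN
  have hN0 : (0:ℝ) < N := by positivity
  set p : ℕ → E := fun k => γ ((k : ℝ) / N) with hp
  have key : ∀ k < N, |f (p (k+1)) - f (p k)| ≤ M * (‖b - a‖ / N) := by
    intro k hk
    have ht1 : (k : ℝ) / N ∈ Icc (0:ℝ) 1 := by
      constructor
      · positivity
      · rw [div_le_one hN0]
        exact_mod_cast hk.le
    obtain ⟨i, hi⟩ := hball _ ht1
    have hk1 : ((k:ℝ)+1) / N ∈ ball ((k:ℝ)/N) δ := by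
      rw [mem_ball, Real.dist_eq]
      have : ((k:ℝ)+1)/N - (k:ℝ)/N = 1 / N := by field_simp; ring
      rw [this, abs_of_pos (by positivity)]
      calc (1:ℝ)/N = 1/(n+1) := by norm_num [hN]
        _ < δ := hn
    have hk0 : (k : ℝ)/N ∈ ball ((k:ℝ)/N) δ := mem_ball_self hδ
    have hm1 : γ (((k:ℝ)+1)/N) ∈ V (γ i) (hγK i) := hi hk1
    have hm0 : γ ((k:ℝ)/N) ∈ V (γ i) (hγK i) := hi hk0
    have hb1 := hVbound _ (hγK i) _ hm1 _ hm0
    have hdiff : γ (((k:ℝ)+1)/N) - γ ((k:ℝ)/N) = (1/N : ℝ) • (b - a) := by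
      simp only [hγdef]
      rw [add_sub_add_left_eq_sub, ← sub_smul]
      congr 1
      field_simp; ring
    have hnorm : ‖γ (((k:ℝ)+1)/N) - γ ((k:ℝ)/N)‖ = ‖b - a‖ / N := by
      rw [hdiff, norm_smul, Real.norm_eq_abs, abs_of_pos (by positivity)]
      ring
    have hcast : ((k+1 : ℕ) : ℝ) = (k : ℝ) + 1 := by push_cast; ring
    rw [hp]
    simp only [hcast]
    rw [hnorm] at hb1
    exact hb1
  have htel : f (p N) - f (p 0) = ∑ k ∈ Finset.range N, (f (p (k+1)) - f (p k)) :=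
    (Finset.sum_range_sub (fun k => f (p k)) N).symm
  have hp0 : p 0 = a := by simp [hp, hγdef]
  have hpN : p N = b := by
    have : ((N:ℕ) : ℝ) / N = 1 := by field_simp
    simp [hp, this, hγdef]
  have habs : |f (p N) - f (p 0)| ≤ M * ‖b - a‖ := by
    rw [htel]
    calc |∑ k ∈ Finset.range N, (f (p (k+1)) - f (p k))|
        ≤ ∑ k ∈ Finset.range N, |f (p (k+1)) - f (p k)| :=
          Finset.abs_sum_le_sum_abs _ _
      _ ≤ ∑ _k ∈ Finset.range N, M * (‖b - a‖ / N) := by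
          apply Finset.sum_le_sum
          intro k hk
          exact key k (Finset.mem_range.1 hk)
      _ = N * (M * (‖b - a‖ / N)) := by
          rw [Finset.sum_const, Finset.card_range, nsmul_eq_mul]
      _ = M * ‖b - a‖ := by
          rw [mul_comm, mul_assoc, div_mul_cancel₀ _ (ne_of_gt hN0)]
  rw [hp0, hpN] at habs
  rw [abs_sub_comm, norm_sub_rev]
  exact habs

variable [FiniteDimensional ℝ E]

lemma dilSet_bddBelow (x : E) :
    BddBelow { c : ℝ | ∃ V : Set E, IsOpen V ∧ x ∈ V ∧ IsCompact (closure V) ∧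
      c = leastLipConst f (closure V) } := by
  refine ⟨0, ?_⟩
  rintro c ⟨V, -, -, -, rfl⟩
  exact leastLipConst_nonneg f _

lemma dilSet_nonempty (x : E) :
    { c : ℝ | ∃ V : Set E, IsOpen V ∧ x ∈ V ∧ IsCompact (closure V) ∧
      c = leastLipConst f (closure V) }.Nonempty := by
  refine ⟨leastLipConst f (closure (ball x 1)), ball x 1, isOpen_ball, mem_ball_self one_pos,
    ?_, rfl⟩
  rw [closure_ball x one_ne_zero]
  exact isCompact_closedBall x 1

lemma dil_nonneg (f : E → ℝ) (x : E) : 0 ≤ dil f x := by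
  apply Real.sInf_nonneg
  rintro c ⟨V, -, -, -, rfl⟩
  exact leastLipConst_nonneg f _

lemma dil_le {x : E} {V : Set E} (hV : IsOpen V) (hx : x ∈ V) (hc : IsCompact (closure V)) :
    dil f x ≤ leastLipConst f (closure V) :=
  csInf_le (dilSet_bddBelow x) ⟨V, hV, hx, hc, rfl⟩

end Aux

/-- For a locally Lipschitz `f : E → ℝ` on a finite-dimensional real normed space and any
`x0`, there is an open convex neighbourhood `U` of `x0` with compact closure such that the
least Lipschitz constant of `f` on `closure U` equals the supremum of the local dilatations
of `f` over `closure U`. -/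
theorem leastLipConst_eq_sSup_dil
    {E : Type*} [NormedAddCommGroup E] [NormedSpace ℝ E] [FiniteDimensional ℝ E]
    (f : E → ℝ) (hf : LocallyLipschitz f) (x0 : E) :
    ∃ U : Set E, IsOpen U ∧ Convex ℝ U ∧ x0 ∈ U ∧ IsCompact (closure U) ∧
      leastLipConst f (closure U) = sSup (dil f '' closure U) := by
  set g : ℝ → ℝ := fun r => leastLipConst f (closedBall x0 r) with hg
  -- g is monotone
  have hg_mono : Monotone g := by
    intro r1 r2 h12
    obtain ⟨C, hC⟩ := exists_lip_bound_of_compact hf (isCompact_closedBall x0 r2)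
    apply Real.sSup_le _ (leastLipConst_nonneg f _)
    rintro c ⟨a, ha, b, hb, hab, rfl⟩
    exact ratio_le_leastLipConst hC (closedBall_subset_closedBall h12 ha)
      (closedBall_subset_closedBall h12 hb) hab
  -- pick a continuity point r ∈ (1,2) of g
  obtain ⟨r, hrc, hr12⟩ : ∃ r, r ∈ {x | ¬ContinuousAt g x}ᶜ ∧ r ∈ Ioo (1:ℝ) 2 :=
    (hg_mono.countable_not_continuousAt.dense_compl ℝ).exists_mem_open isOpen_Ioo
      ⟨3/2, by norm_num⟩
  have hrcont : ContinuousAt g r := not_not.1 hrc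
  have hr0 : (0:ℝ) < r := lt_trans one_pos hr12.1
  -- dil f x ≤ g r' for x in the closed ball and r' > r
  have stepA : ∀ x ∈ closedBall x0 r, ∀ r', r < r' → dil f x ≤ g r' := by
    intro x hx r' hrr'
    have hr'0 : r' ≠ 0 := ne_of_gt (lt_trans hr0 hrr')
    have h1 : dil f x ≤ leastLipConst f (closure (ball x0 r')) :=
      dil_le isOpen_ball (by rw [mem_ball]; exact lt_of_le_of_lt (mem_closedBall.1 hx) hrr')
        (by rw [closure_ball x0 hr'0]; exact isCompact_closedBall x0 r')
    rwa [closure_ball x0 hr'0] at h1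
  -- dil f x ≤ g r for x in the closed ball, using continuity of g at r
  have stepA' : ∀ x ∈ closedBall x0 r, dil f x ≤ g r := by
    intro x hx
    refine le_of_forall_pos_le_add fun ε hε => ?_
    have h1 : ∀ᶠ r' in nhds r, g r' < g r + ε :=
      hrcont.eventually_lt_const (by linarith)
    have h2 : ∀ᶠ r' in nhdsWithin r (Ioi r), g r' < g r + ε :=
      h1.filter_mono nhdsWithin_le_nhds
    obtain ⟨r', hr'mem, hr'lt⟩ := (eventually_mem_nhdsWithin.and h2).exists
    exact le_trans (stepA x hx r' hr'mem) hr'lt.le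
  -- the image set of dilatations
  set S : ℝ := sSup (dil f '' closedBall x0 r) with hS
  have himg_ne : (dil f '' closedBall x0 r).Nonempty :=
    ⟨dil f x0, mem_image_of_mem _ (mem_closedBall_self hr0.le)⟩
  have himg_bdd : BddAbove (dil f '' closedBall x0 r) := by
    refine ⟨g (r + 1), ?_⟩
    rintro c ⟨x, hx, rfl⟩
    exact stepA x hx (r + 1) (by linarith)
  have hdil_le_S : ∀ x ∈ closedBall x0 r, dil f x ≤ S :=
    fun x hx => le_csSup himg_bdd (mem_image_of_mem _ hx)
  have hS0 : 0 ≤ S := le_trans (dil_nonneg f x0)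
    (hdil_le_S x0 (mem_closedBall_self hr0.le))
  -- upper bound: S ≤ g r
  have hSle : S ≤ g r := by
    apply Real.sSup_le _ (leastLipConst_nonneg f _)
    rintro c ⟨x, hx, rfl⟩
    exact stepA' x hx
  -- lower bound: g r ≤ S
  have hgle : g r ≤ S := by
    apply Real.sSup_le _ hS0
    rintro c ⟨a, ha, b, hb, hab, rfl⟩
    have hn : 0 < ‖a - b‖ := by rw [norm_pos_iff, sub_ne_zero]; exact hab
    rw [div_le_iff₀ hn]
    refine le_of_forall_pos_le_add fun ε hε => ?_
    have hkey : |f a - f b| ≤ (S + ε / ‖a - b‖) * ‖a - b‖ := by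
      refine convex_slope_bound (convex_closedBall x0 r) ?_ ha hb
      intro x hx
      have hxS : dil f x < S + ε / ‖a - b‖ :=
        lt_of_le_of_lt (hdil_le_S x hx) (lt_add_of_pos_right S (div_pos hε hn))
      obtain ⟨c, ⟨V, hVo, hVx, hVc, rfl⟩, hclt⟩ :=
        exists_lt_of_csInf_lt (dilSet_nonempty x) hxS
      refine ⟨V, hVo, hVx, fun u hu v hv => ?_⟩
      obtain ⟨C, hC⟩ := exists_lip_bound_of_compact hf hVc
      have := abs_sub_le_leastLipConst hC (subset_closure hu) (subset_closure hv)
      calc |f u - f v| ≤ leastLipConst f (closure V) * ‖u - v‖ := this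
        _ ≤ (S + ε / ‖a - b‖) * ‖u - v‖ :=
            mul_le_mul_of_nonneg_right hclt.le (norm_nonneg _)
    calc |f a - f b| ≤ (S + ε / ‖a - b‖) * ‖a - b‖ := hkey
      _ = S * ‖a - b‖ + ε := by field_simp
  -- assemble
  refine ⟨ball x0 r, isOpen_ball, convex_ball x0 r, mem_ball_self hr0, ?_, ?_⟩
  · rw [closure_ball x0 hr0.ne']
    exact isCompact_closedBall x0 r
  · rw [closure_ball x0 hr0.ne']
    exact le_antisymm hgle hSle
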